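/- Let 0 < α < 1, κ > 0, p > 0, T > 0. Let w : [0, 1] × [0, T] → ℝ be such that w is continuously differentiable in τ on (0, T], twice continuously differentiable in v, with ∂w/∂τ, (1/ξ) ∂w/∂v and ξ^{−α} ∂²w/∂v² all integrable in the time variable on (0, τ) for each τ ∈ (0, T] and v ∈ (0, 1), and w(v, τ) → w(v, 0) as τ → 0⁺. Suppose w satisfies, for all v ∈ (0, 1) and τ ∈ (0, T], the transformed subdiffusion equation (1/Γ(1−α)) ∫₀^τ (τ−ξ)^{−α} (∂w/∂ξ)(v, ξ) dξ − (α v/(2Γ(1−α))) ∫₀^τ (τ−ξ)^{−α} ξ^{−1} (∂w/∂v)(v, ξ) dξ = (κ/(p² τ^α)) (∂²w/∂v²)(v, τ). Then w also satisfies, for all v ∈ (0, 1) and τ ∈ (0, T], the integro-differential equation w(v, τ) = w(v, 0) + (α v/2) ∫₀^τ ξ^{−1} (∂w/∂v)(v, ξ) dξ + (κ/(p² Γ(α))) ∫₀^τ (τ−ξ)^{α−1} ξ^{−α} (∂²w/∂v²)(v, ξ) dξ. -/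

import Mathlib

open Real MeasureTheory Filter

open Set intervalIntegral

private lemma betaReal_aux {a b : ℝ} (ha : 0 < a) (hb : 0 < b) :
    IntervalIntegrable (fun t : ℝ => t ^ (a - 1) * (1 - t) ^ (b - 1)) volume 0 1 ∧
    ∫ t in (0:ℝ)..1, t ^ (a - 1) * (1 - t) ^ (b - 1)
      = Real.Gamma a * Real.Gamma b / Real.Gamma (a + b) := by
  have hare : 0 < (a : ℂ).re := by simpa using ha
  have hbre : 0 < (b : ℂ).re := by simpa using hb
  have hcompl := Complex.betaIntegral_convergent hare hbre
  have hkey : ∀ t : ℝ, t ∈ Set.Icc (0:ℝ) 1 →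
      ((t : ℂ) ^ ((a : ℂ) - 1) * ((1:ℂ) - t) ^ ((b : ℂ) - 1))
        = ((t ^ (a - 1) * (1 - t) ^ (b - 1) : ℝ) : ℂ) := by
    intro t ht
    rw [Complex.ofReal_mul, Complex.ofReal_cpow ht.1 (a - 1),
      Complex.ofReal_cpow (by linarith [ht.2] : (0:ℝ) ≤ 1 - t) (b - 1)]
    push_cast
    ring_nf
  constructor
  · constructor
    · refine hcompl.1.re.congr ?_
      filter_upwards [ae_restrict_mem measurableSet_Ioc] with t ht
      rw [hkey t ⟨ht.1.le, ht.2⟩]; simp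
    · simp
  · have h1 : ∫ t in (0:ℝ)..1, t ^ (a - 1) * (1 - t) ^ (b - 1)
        = (Complex.betaIntegral a b).re := by
      rw [Complex.betaIntegral]
      rw [intervalIntegral.integral_congr (g := fun t : ℝ =>
          ((t ^ (a - 1) * (1 - t) ^ (b - 1) : ℝ) : ℂ)) ?_]
      · rw [intervalIntegral.integral_ofReal]
        simp
      · intro t ht
        rw [Set.uIcc_of_le (by norm_num : (0:ℝ) ≤ 1)] at ht
        exact hkey t ht
    rw [h1]
    have h2 := Complex.Gamma_mul_Gamma_eq_betaIntegral hare hbre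
    have hGab : Real.Gamma (a + b) ≠ 0 := (Real.Gamma_pos_of_pos (by linarith)).ne'
    have h3 : Complex.betaIntegral a b =
        ((Real.Gamma a * Real.Gamma b / Real.Gamma (a + b) : ℝ) : ℂ) := by
      have : ((a : ℂ) + b) = ((a + b : ℝ) : ℂ) := by push_cast; ring
      rw [this] at h2
      rw [Complex.Gamma_ofReal, Complex.Gamma_ofReal, Complex.Gamma_ofReal] at h2
      have hcast : (Real.Gamma (a + b) : ℂ) ≠ 0 := by exact_mod_cast hGab
      rw [Complex.ofReal_div, Complex.ofReal_mul, eq_div_iff hcast]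
      linear_combination -h2
    rw [h3, Complex.ofReal_re]

private lemma betaShift {α : ℝ} (hα : α ∈ Set.Ioo (0:ℝ) 1) {ξ τ : ℝ} (hξτ : ξ < τ) :
    IntervalIntegrable (fun s => (τ - s) ^ (α - 1) * (s - ξ) ^ (-α)) volume ξ τ ∧
    ∫ s in ξ..τ, (τ - s) ^ (α - 1) * (s - ξ) ^ (-α)
      = Real.Gamma α * Real.Gamma (1 - α) := by
  have hc : 0 < τ - ξ := sub_pos.2 hξτ
  set c := τ - ξ with hcdef
  obtain ⟨hBint, hBval⟩ := betaReal_aux (a := 1 - α) (b := α) (by linarith [hα.2]) hα.1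
  rw [show (1 - α) - 1 = -α from by ring] at hBint hBval
  simp only [show (1 - α) + α = 1 from by ring, Real.Gamma_one, div_one] at hBval
  set K : ℝ → ℝ := fun s => (τ - s) ^ (α - 1) * (s - ξ) ^ (-α) with hK
  have hfun : ∀ t ∈ Set.Icc (0:ℝ) 1,
      K (c * t + ξ) = c⁻¹ * (t ^ (-α) * (1 - t) ^ (α - 1)) := by
    intro t ht
    have h1 : τ - (c * t + ξ) = c * (1 - t) := by rw [hcdef]; ring
    have h2 : (c * t + ξ) - ξ = c * t := by ring
    rw [hK]
    simp only [h1, h2]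
    rw [Real.mul_rpow hc.le (by linarith [ht.2]), Real.mul_rpow hc.le ht.1,
      show c ^ (α - 1) * (1 - t) ^ (α - 1) * (c ^ (-α) * t ^ (-α))
        = (c ^ (α - 1) * c ^ (-α)) * (t ^ (-α) * (1 - t) ^ (α - 1)) from by ring,
      ← Real.rpow_add hc, show α - 1 + -α = -1 from by ring, Real.rpow_neg_one]
  have hg : IntervalIntegrable (fun t => K (c * t + ξ)) volume 0 1 := by
    refine (hBint.const_mul c⁻¹).congr ?_
    intro t ht
    rw [Set.uIoc_of_le (by norm_num : (0:ℝ) ≤ 1)] at ht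
    exact (hfun t ⟨ht.1.le, ht.2⟩).symm
  constructor
  · have h2 := hg.comp_mul_left (c := c⁻¹)
    have h2' : IntervalIntegrable (fun x => K (x + ξ)) volume 0 c := by
      have he : (fun x => K (c * (c⁻¹ * x) + ξ)) = fun x => K (x + ξ) := by
        funext x; rw [mul_inv_cancel_left₀ hc.ne' x]
      simpa [he, hc.ne'] using h2
    have h3 := h2'.comp_sub_right ξ
    have he2 : (fun x => K ((x - ξ) + ξ)) = K := by funext x; rw [sub_add_cancel]
    simpa [he2, hcdef] using h3
  · have hsub := intervalIntegral.integral_comp_mul_add K hc.ne' ξ (a := 0) (b := 1)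
    simp only [mul_zero, zero_add, mul_one, hcdef] at hsub
    rw [sub_add_cancel] at hsub
    have hleft : ∫ x in (0:ℝ)..1, K ((τ - ξ) * x + ξ)
        = c⁻¹ * (Real.Gamma (1 - α) * Real.Gamma α) := by
      rw [← hBval, ← intervalIntegral.integral_const_mul]
      refine intervalIntegral.integral_congr fun t ht => ?_
      rw [Set.uIcc_of_le (by norm_num : (0:ℝ) ≤ 1)] at ht
      rw [← hcdef]; exact hfun t ht
    rw [hleft] at hsub
    have : ∫ x in ξ..τ, K x = c * (c⁻¹ * (Real.Gamma (1 - α) * Real.Gamma α)) := by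
      rw [hsub, ← hcdef, smul_eq_mul, ← mul_assoc, mul_inv_cancel₀ hc.ne', one_mul]
    rw [this, ← mul_assoc, mul_inv_cancel₀ hc.ne', one_mul, mul_comm]

private lemma RL_semigroup {α : ℝ} (hα : α ∈ Set.Ioo (0:ℝ) 1) {τ : ℝ} (hτ : 0 < τ)
    {f : ℝ → ℝ} (hf : IntegrableOn f (Set.Ioc 0 τ)) :
    IntegrableOn (fun s => (τ - s) ^ (α - 1) * ∫ ξ in (0:ℝ)..s, (s - ξ) ^ (-α) * f ξ)
      (Set.Ioc 0 τ) ∧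
    ∫ s in Set.Ioc 0 τ, (τ - s) ^ (α - 1) * ∫ ξ in (0:ℝ)..s, (s - ξ) ^ (-α) * f ξ
      = Real.Gamma α * Real.Gamma (1 - α) * ∫ ξ in Set.Ioc 0 τ, f ξ := by
  set μ : Measure ℝ := volume.restrict (Set.Ioo 0 τ) with hμ
  set Bc : ℝ := Real.Gamma α * Real.Gamma (1 - α) with hBc
  set P : ℝ × ℝ → ℝ := Set.indicator {q : ℝ × ℝ | q.2 < q.1}
      (fun q => (τ - q.1) ^ (α - 1) * (q.1 - q.2) ^ (-α) * f q.2) with hP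
  have hset : MeasurableSet {q : ℝ × ℝ | q.2 < q.1} :=
    measurableSet_lt measurable_snd measurable_fst
  have hfIoo : IntegrableOn f (Set.Ioo 0 τ) := hf.mono_set Set.Ioo_subset_Ioc_self
  -- measurability of P
  have hPm : AEStronglyMeasurable P (μ.prod μ) := by
    refine AEStronglyMeasurable.indicator ?_ hset
    refine AEStronglyMeasurable.mul ?_ ?_
    · exact (Measurable.aestronglyMeasurable (by fun_prop))
    · exact hfIoo.aestronglyMeasurable.comp_snd
  -- slice description in s, for fixed ξ
  have sliceEq : ∀ ξ : ℝ, ∀ s : ℝ, P (s, ξ) =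
      Set.indicator (Set.Ioi ξ) (fun s => (τ - s) ^ (α - 1) * (s - ξ) ^ (-α)) s * f ξ := by
    intro ξ s
    by_cases h : ξ < s
    · rw [hP, Set.indicator_of_mem (by exact h), Set.indicator_of_mem (by exact h)]
    · rw [hP, Set.indicator_of_notMem (by exact h), Set.indicator_of_notMem (by exact h),
        zero_mul]
  have hIoiInter : ∀ ξ ∈ Set.Ioo (0:ℝ) τ, Set.Ioi ξ ∩ Set.Ioo 0 τ = Set.Ioo ξ τ := by
    intro ξ hξ
    ext x
    simp only [Set.mem_inter_iff, Set.mem_Ioi, Set.mem_Ioo]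
    constructor
    · rintro ⟨h1, _, h3⟩; exact ⟨h1, h3⟩
    · rintro ⟨h1, h2⟩; exact ⟨h1, by linarith [hξ.1], h2⟩
  -- integrability of each slice
  have hslice : ∀ ξ ∈ Set.Ioo (0:ℝ) τ, Integrable (fun s => P (s, ξ)) μ := by
    intro ξ hξ
    have hK := (betaShift hα hξ.2).1.1
    have h1 : Integrable
        (Set.indicator (Set.Ioi ξ) (fun s => (τ - s) ^ (α - 1) * (s - ξ) ^ (-α))) μ := by
      rw [integrable_indicator_iff measurableSet_Ioi]
      rw [IntegrableOn, hμ, Measure.restrict_restrict measurableSet_Ioi, hIoiInter ξ hξ]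
      exact hK.mono_set Set.Ioo_subset_Ioc_self
    simpa only [← sliceEq ξ] using h1.mul_const (f ξ)
  -- the norm integral in s, for fixed ξ
  have hnormEq : ∀ ξ ∈ Set.Ioo (0:ℝ) τ, ∫ s, ‖P (s, ξ)‖ ∂μ = Bc * |f ξ| := by
    intro ξ hξ
    have h1 : (fun s => ‖P (s, ξ)‖) = Set.indicator (Set.Ioi ξ)
        (fun s => ‖(τ - s) ^ (α - 1) * (s - ξ) ^ (-α) * f ξ‖) := by
      funext s
      rw [sliceEq ξ s, ← norm_indicator_eq_indicator_norm]
      congr 1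
      by_cases h : s ∈ Set.Ioi ξ
      · rw [Set.indicator_of_mem h, Set.indicator_of_mem h]
      · rw [Set.indicator_of_notMem h, Set.indicator_of_notMem h, zero_mul]
    rw [h1, MeasureTheory.integral_indicator measurableSet_Ioi, hμ,
      Measure.restrict_restrict measurableSet_Ioi, hIoiInter ξ hξ]
    have h2 : ∫ s in Set.Ioo ξ τ, ‖(τ - s) ^ (α - 1) * (s - ξ) ^ (-α) * f ξ‖
        = ∫ s in Set.Ioo ξ τ, ((τ - s) ^ (α - 1) * (s - ξ) ^ (-α)) * |f ξ| := by
      refine setIntegral_congr_fun measurableSet_Ioo fun s hs => ?_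
      rw [Real.norm_eq_abs, abs_mul, abs_mul,
        abs_of_nonneg (Real.rpow_nonneg (by linarith [hs.2]) _),
        abs_of_nonneg (Real.rpow_nonneg (by linarith [hs.1]) _)]
    rw [h2, MeasureTheory.integral_mul_const, ← MeasureTheory.integral_Ioc_eq_integral_Ioo,
      ← intervalIntegral.integral_of_le hξ.2.le, (betaShift hα hξ.2).2, mul_comm]
  -- integrability of the norm integral
  have hnormInt : Integrable (fun ξ => ∫ s, ‖P (s, ξ)‖ ∂μ) μ := by
    refine ((hfIoo.norm.const_mul Bc).congr ?_)
    rw [hμ]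
    filter_upwards [ae_restrict_mem measurableSet_Ioo] with ξ hξ
    exact (hnormEq ξ hξ).symm
  -- integrability on the product
  have hPint : Integrable P (μ.prod μ) := by
    refine (integrable_prod_iff' hPm).2 ⟨?_, hnormInt⟩
    rw [hμ]
    filter_upwards [ae_restrict_mem measurableSet_Ioo] with ξ hξ
    exact hslice ξ hξ
  -- inner integral in ξ, for fixed s
  have innerEq : ∀ s ∈ Set.Ioo (0:ℝ) τ, (∫ ξ, P (s, ξ) ∂μ)
      = (τ - s) ^ (α - 1) * ∫ ξ in (0:ℝ)..s, (s - ξ) ^ (-α) * f ξ := by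
    intro s hs
    have h1 : (fun ξ => P (s, ξ)) = Set.indicator (Set.Iio s)
        (fun ξ => (τ - s) ^ (α - 1) * ((s - ξ) ^ (-α) * f ξ)) := by
      funext ξ
      by_cases h : ξ < s
      · rw [hP, Set.indicator_of_mem (by exact h), Set.indicator_of_mem (by exact h),
          mul_assoc]
      · rw [hP, Set.indicator_of_notMem (by exact h), Set.indicator_of_notMem (by exact h)]
    have h2 : Set.Iio s ∩ Set.Ioo 0 τ = Set.Ioo 0 s := by
      ext x
      simp only [Set.mem_inter_iff, Set.mem_Iio, Set.mem_Ioo]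
      constructor
      · rintro ⟨h1', h2', _⟩; exact ⟨h2', h1'⟩
      · rintro ⟨h1', h2'⟩; exact ⟨h2', h1', by linarith [hs.2]⟩
    rw [h1, MeasureTheory.integral_indicator measurableSet_Iio, hμ,
      Measure.restrict_restrict measurableSet_Iio, h2, MeasureTheory.integral_const_mul,
      ← MeasureTheory.integral_Ioc_eq_integral_Ioo,
      ← intervalIntegral.integral_of_le hs.1.le]
  -- outer integral in s, for fixed ξ
  have outerEq : ∀ ξ ∈ Set.Ioo (0:ℝ) τ, (∫ s, P (s, ξ) ∂μ) = Bc * f ξ := by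
    intro ξ hξ
    simp only [sliceEq ξ]
    rw [MeasureTheory.integral_mul_const, MeasureTheory.integral_indicator measurableSet_Ioi, hμ,
      Measure.restrict_restrict measurableSet_Ioi, hIoiInter ξ hξ,
      ← MeasureTheory.integral_Ioc_eq_integral_Ioo,
      ← intervalIntegral.integral_of_le hξ.2.le, (betaShift hα hξ.2).2, ← hBc, mul_comm Bc]
  constructor
  · have h1 : Integrable (fun s => ∫ ξ, P (s, ξ) ∂μ) μ := hPint.integral_prod_left
    have h2 : IntegrableOn
        (fun s => (τ - s) ^ (α - 1) * ∫ ξ in (0:ℝ)..s, (s - ξ) ^ (-α) * f ξ)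
        (Set.Ioo 0 τ) := by
      refine h1.congr ?_
      rw [hμ]
      filter_upwards [ae_restrict_mem measurableSet_Ioo] with s hs
      exact innerEq s hs
    exact (integrableOn_Ioc_iff_integrableOn_Ioo).2 h2
  · have hswap := MeasureTheory.integral_integral_swap (μ := μ) (ν := μ)
      (f := fun s ξ => P (s, ξ)) hPint
    have hL : ∫ s, (∫ ξ, P (s, ξ) ∂μ) ∂μ
        = ∫ s in Set.Ioc 0 τ, (τ - s) ^ (α - 1) * ∫ ξ in (0:ℝ)..s, (s - ξ) ^ (-α) * f ξ := by
      rw [MeasureTheory.integral_Ioc_eq_integral_Ioo, hμ]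
      exact setIntegral_congr_fun measurableSet_Ioo fun s hs => innerEq s hs
    have hR : ∫ ξ, (∫ s, P (s, ξ) ∂μ) ∂μ = Bc * ∫ ξ in Set.Ioc 0 τ, f ξ := by
      rw [MeasureTheory.integral_Ioc_eq_integral_Ioo, ← MeasureTheory.integral_const_mul, hμ]
      exact setIntegral_congr_fun measurableSet_Ioo fun ξ hξ => outerEq ξ hξ
    rw [← hL, hswap, hR]

private lemma ftc_improper {T τ : ℝ} (hτ : τ ∈ Set.Ioc (0:ℝ) T) {g : ℝ → ℝ}
    (hg : ContDiffOn ℝ 1 g (Set.Ioc 0 T))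
    (hg0 : Tendsto g (nhdsWithin 0 (Set.Ioi 0)) (nhds (g 0)))
    (hint : IntervalIntegrable (deriv g) volume 0 τ) :
    ∫ ξ in (0:ℝ)..τ, deriv g ξ = g τ - g 0 := by
  have hτ0 := hτ.1
  -- the key equality on [ε, τ]
  have key : ∀ ε ∈ Set.Ioo (0:ℝ) τ, ∫ ξ in ε..τ, deriv g ξ = g τ - g ε := by
    intro ε hε
    refine intervalIntegral.integral_eq_sub_of_hasDeriv_right_of_le hε.2.le ?_ ?_ ?_
    · exact (hg.continuousOn).mono fun x hx => ⟨lt_of_lt_of_le hε.1 hx.1, hx.2.trans hτ.2⟩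
    · intro x hx
      have hxm : Set.Ioc (0:ℝ) T ∈ nhds x :=
        Ioc_mem_nhds (lt_trans hε.1 hx.1) (lt_of_lt_of_le hx.2 hτ.2)
      have hdiff : DifferentiableAt ℝ g x :=
        ((hg.differentiableOn one_ne_zero) x ⟨lt_trans hε.1 hx.1, hx.2.le.trans hτ.2⟩
          ).differentiableAt hxm
      exact hdiff.hasDerivAt.hasDerivWithinAt
    · exact hint.mono_set (by
        rw [Set.uIcc_of_le hε.2.le, Set.uIcc_of_le hτ0.le]
        exact Set.Icc_subset_Icc hε.1.le le_rfl)
  -- pass to the limit ε → 0⁺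
  have hcont : ContinuousWithinAt (fun x => ∫ t in (0:ℝ)..x, deriv g t) (Set.Icc 0 τ) 0 := by
    have := intervalIntegral.continuousOn_primitive_interval
      (a := 0) (b := τ) (f := deriv g) (μ := volume) (by
        rw [Set.uIcc_of_le hτ0.le, integrableOn_Icc_iff_integrableOn_Ioc]
        exact hint.1)
    rw [Set.uIcc_of_le hτ0.le] at this
    exact this 0 (Set.left_mem_Icc.2 hτ0.le)
  haveI hne : (nhdsWithin (0:ℝ) (Set.Ioo 0 τ)).NeBot := by
    rw [nhdsWithin_Ioo_eq_nhdsGT hτ0]; infer_instance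
  have h1 : Tendsto (fun ε => ∫ t in (0:ℝ)..ε, deriv g t)
      (nhdsWithin 0 (Set.Ioo 0 τ)) (nhds 0) := by
    have h0 : (∫ t in (0:ℝ)..(0:ℝ), deriv g t) = 0 := intervalIntegral.integral_same
    have ht := hcont.tendsto
    rw [h0] at ht
    exact ht.mono_left (nhdsWithin_mono 0 fun x hx => ⟨hx.1.le, hx.2.le⟩)
  have h2 : Tendsto (fun ε => g τ - g ε) (nhdsWithin 0 (Set.Ioo 0 τ))
      (nhds (g τ - g 0)) := by
    refine tendsto_const_nhds.sub ?_
    rw [nhdsWithin_Ioo_eq_nhdsGT hτ0]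
    exact hg0
  have hev : (fun ε => g τ - g ε) =ᶠ[nhdsWithin (0:ℝ) (Set.Ioo 0 τ)]
      fun ε => (∫ t in (0:ℝ)..τ, deriv g t) - ∫ t in (0:ℝ)..ε, deriv g t := by
    filter_upwards [self_mem_nhdsWithin] with ε hε
    have hadd : (∫ t in (0:ℝ)..ε, deriv g t) + ∫ t in ε..τ, deriv g t
        = ∫ t in (0:ℝ)..τ, deriv g t := by
      refine intervalIntegral.integral_add_adjacent_intervals ?_ ?_
      · exact hint.mono_set (by
          rw [Set.uIcc_of_le hε.1.le, Set.uIcc_of_le hτ0.le]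
          exact Set.Icc_subset_Icc le_rfl hε.2.le)
      · exact hint.mono_set (by
          rw [Set.uIcc_of_le hε.2.le, Set.uIcc_of_le hτ0.le]
          exact Set.Icc_subset_Icc hε.1.le le_rfl)
    linarith [hadd, key ε hε]
  have := tendsto_nhds_unique (tendsto_const_nhds.sub h1) (h2.congr' hev)
  linarith [this]



/-- If `w`, suitably regular on `[0,1] × [0,T]`, satisfies the transformed
subdiffusion equation of the liquid phase in the front-fixing variable
`v = x/(p τ^(α/2))`, then it satisfies the associated integro-differential
equation obtained by applying the Riemann–Liouville integral `I₀₊^α`. -/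
theorem liquid_integroDifferential_equation
    (α κ p T : ℝ) (hα : α ∈ Set.Ioo (0:ℝ) 1) (hκ : 0 < κ) (hp : 0 < p) (hT : 0 < T)
    (w : ℝ → ℝ → ℝ)
    -- continuously differentiable in τ on (0, T]
    (hreg_τ : ∀ v ∈ Set.Icc (0:ℝ) 1, ContDiffOn ℝ 1 (fun τ => w v τ) (Set.Ioc 0 T))
    -- twice continuously differentiable in v
    (hreg_v : ∀ τ ∈ Set.Ioc (0:ℝ) T, ContDiffOn ℝ 2 (fun v => w v τ) (Set.Icc 0 1))
    -- ∂w/∂τ integrable in time on (0, τ)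
    (hint₁ : ∀ v ∈ Set.Ioo (0:ℝ) 1, ∀ τ ∈ Set.Ioc (0:ℝ) T,
      IntervalIntegrable (fun ξ => deriv (fun s => w v s) ξ) volume 0 τ)
    -- (1/ξ) ∂w/∂v integrable in time on (0, τ)
    (hint₂ : ∀ v ∈ Set.Ioo (0:ℝ) 1, ∀ τ ∈ Set.Ioc (0:ℝ) T,
      IntervalIntegrable (fun ξ => ξ⁻¹ * deriv (fun y => w y ξ) v) volume 0 τ)
    -- ξ^(−α) ∂²w/∂v² integrable in time on (0, τ)
    (hint₃ : ∀ v ∈ Set.Ioo (0:ℝ) 1, ∀ τ ∈ Set.Ioc (0:ℝ) T,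
      IntervalIntegrable (fun ξ => ξ ^ (-α) * iteratedDeriv 2 (fun y => w y ξ) v)
        volume 0 τ)
    -- w(v, τ) → w(v, 0) as τ → 0⁺
    (hcont₀ : ∀ v ∈ Set.Icc (0:ℝ) 1,
      Tendsto (fun τ => w v τ) (nhdsWithin 0 (Set.Ioi 0)) (nhds (w v 0)))
    -- the transformed subdiffusion equation
    (heq : ∀ v ∈ Set.Ioo (0:ℝ) 1, ∀ τ ∈ Set.Ioc (0:ℝ) T,
      (1 / Real.Gamma (1 - α)) *
          (∫ ξ in (0:ℝ)..τ, (τ - ξ) ^ (-α) * deriv (fun s => w v s) ξ) -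
        (α * v / (2 * Real.Gamma (1 - α))) *
          (∫ ξ in (0:ℝ)..τ, (τ - ξ) ^ (-α) * ξ⁻¹ * deriv (fun y => w y ξ) v) =
        κ / (p ^ 2 * τ ^ α) * iteratedDeriv 2 (fun y => w y τ) v) :
    ∀ v ∈ Set.Ioo (0:ℝ) 1, ∀ τ ∈ Set.Ioc (0:ℝ) T,
      w v τ = w v 0 +
        (α * v / 2) * (∫ ξ in (0:ℝ)..τ, ξ⁻¹ * deriv (fun y => w y ξ) v) +
        (κ / (p ^ 2 * Real.Gamma α)) *
          ∫ ξ in (0:ℝ)..τ,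
            (τ - ξ) ^ (α - 1) * ξ ^ (-α) * iteratedDeriv 2 (fun y => w y ξ) v := by
  intro v hv τ hτ
  have hτ0 : 0 < τ := hτ.1
  have hΓa : 0 < Real.Gamma α := Real.Gamma_pos_of_pos hα.1
  have hΓ1 : 0 < Real.Gamma (1 - α) := Real.Gamma_pos_of_pos (by linarith [hα.2])
  set Γa := Real.Gamma α with hΓadef
  set Γ1 := Real.Gamma (1 - α) with hΓ1def
  set F : ℝ → ℝ := fun ξ => deriv (fun s => w v s) ξ with hF
  set G : ℝ → ℝ := fun ξ => ξ⁻¹ * deriv (fun y => w y ξ) v with hG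
  set W2 : ℝ → ℝ := fun ξ => iteratedDeriv 2 (fun y => w y ξ) v with hW2
  have hFint : IntervalIntegrable F volume 0 τ := hint₁ v hv τ hτ
  have hGint : IntervalIntegrable G volume 0 τ := hint₂ v hv τ hτ
  obtain ⟨hAint, hAval⟩ := RL_semigroup hα hτ0 hFint.1
  obtain ⟨hBint, hBval⟩ := RL_semigroup hα hτ0 hGint.1
  have hvIcc : v ∈ Set.Icc (0:ℝ) 1 := ⟨hv.1.le, hv.2.le⟩
  have hFTC : ∫ ξ in (0:ℝ)..τ, F ξ = w v τ - w v 0 :=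
    ftc_improper hτ (hreg_τ v hvIcc) (hcont₀ v hvIcc) hFint
  -- the pointwise equation, multiplied by the kernel (τ - s) ^ (α - 1)
  have hpt : ∀ s ∈ Set.Ioc (0:ℝ) τ,
      (τ - s) ^ (α - 1) * ((κ / p ^ 2) * (s ^ (-α) * W2 s)) =
      (1 / Γ1) * ((τ - s) ^ (α - 1) * ∫ ξ in (0:ℝ)..s, (s - ξ) ^ (-α) * F ξ) -
        (α * v / (2 * Γ1)) * ((τ - s) ^ (α - 1) * ∫ ξ in (0:ℝ)..s, (s - ξ) ^ (-α) * G ξ) := by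
    intro s hs
    have hsT : s ∈ Set.Ioc (0:ℝ) T := ⟨hs.1, hs.2.trans hτ.2⟩
    have h := heq v hv s hsT
    have hassoc : (∫ ξ in (0:ℝ)..s, (s - ξ) ^ (-α) * ξ⁻¹ * deriv (fun y => w y ξ) v)
        = ∫ ξ in (0:ℝ)..s, (s - ξ) ^ (-α) * G ξ := by
      refine intervalIntegral.integral_congr fun ξ _ => ?_
      rw [hG, mul_assoc]
    rw [hassoc] at h
    have hsα : (0:ℝ) < s ^ α := Real.rpow_pos_of_pos hs.1 α
    have hsym : κ / (p ^ 2 * s ^ α) = κ / p ^ 2 * s ^ (-α) := by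
      rw [Real.rpow_neg hs.1.le]
      field_simp
    rw [hsym] at h
    simp only [hF, hG, hW2, ← mul_assoc]
    simp only [hF, hG, ← mul_assoc] at h
    linear_combination (-(τ - s) ^ (α - 1)) * h
  have hmeas : MeasurableSet (Set.Ioc (0:ℝ) τ) := measurableSet_Ioc
  have hsplit : ∫ s in Set.Ioc (0:ℝ) τ, (τ - s) ^ (α - 1) * ((κ / p ^ 2) * (s ^ (-α) * W2 s))
      = (1 / Γ1) * (Γa * Γ1 * ∫ ξ in Set.Ioc (0:ℝ) τ, F ξ) -
        (α * v / (2 * Γ1)) * (Γa * Γ1 * ∫ ξ in Set.Ioc (0:ℝ) τ, G ξ) := by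
    rw [MeasureTheory.setIntegral_congr_fun hmeas hpt,
      MeasureTheory.integral_sub (hAint.const_mul _) (hBint.const_mul _),
      MeasureTheory.integral_const_mul, MeasureTheory.integral_const_mul, hAval, hBval]
  have hIocF : ∫ ξ in Set.Ioc (0:ℝ) τ, F ξ = w v τ - w v 0 := by
    rw [← intervalIntegral.integral_of_le hτ0.le, hFTC]
  set IG : ℝ := ∫ ξ in Set.Ioc (0:ℝ) τ, G ξ with hIG
  have hIGint : (∫ ξ in (0:ℝ)..τ, ξ⁻¹ * deriv (fun y => w y ξ) v) = IG := by
    rw [hIG, ← intervalIntegral.integral_of_le hτ0.le]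
  -- relate the target integral
  have htarget : (∫ ξ in (0:ℝ)..τ, (τ - ξ) ^ (α - 1) * ξ ^ (-α) * W2 ξ)
      = (p ^ 2 / κ) * ((1 / Γ1) * (Γa * Γ1 * (w v τ - w v 0)) -
          (α * v / (2 * Γ1)) * (Γa * Γ1 * IG)) := by
    rw [hIocF] at hsplit
    have h1 : ∫ s in Set.Ioc (0:ℝ) τ, (τ - s) ^ (α - 1) * ((κ / p ^ 2) * (s ^ (-α) * W2 s))
        = (κ / p ^ 2) * ∫ s in Set.Ioc (0:ℝ) τ, (τ - s) ^ (α - 1) * s ^ (-α) * W2 s := by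
      rw [← MeasureTheory.integral_const_mul]
      exact MeasureTheory.setIntegral_congr_fun hmeas fun s _ => by ring
    rw [h1] at hsplit
    rw [intervalIntegral.integral_of_le hτ0.le]
    have hκp : κ / p ^ 2 ≠ 0 := by positivity
    field_simp at hsplit ⊢
    linarith [hsplit]
  rw [hIGint, htarget]
  have hκ0 : κ ≠ 0 := hκ.ne'
  have hp0 : (p:ℝ) ^ 2 ≠ 0 := by positivity
  field_simp
  ring
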